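/- arXiv:2307.12338 — 5 statements merged into one kernel-verified Lean document; each statement's English description precedes it below -/
import Mathlib

section
/- (Lemma 1: nonnegativity of the gift counter in EEFEWP.) Let σ : ℕ → stdSimplex ℝ (Fin m) be the sequence of mixed strategies maintained by the algorithm and c : ℕ → ℝ the sequence of credited round payoffs, and suppose that for every t ≥ 1 the credited payoff dominates the worst case, i.e. c t ≥ wc (σ t). Define the gift counter by k 1 = 0 and k (t+1) = k t + c t − v'. If for every t ≥ 1 either σ t = σ⁰ or wc (σ t) ≥ v' − k t (the strategy played is k t-prime-safe), then k t ≥ 0 for all t ≥ 1. -/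
noncomputable section

variable {m n : ℕ}

/-- Expected payoff to player 1 when player 1 plays mixed strategy `x`
and player 2 plays mixed strategy `y`. -/
def U (A : Fin m → Fin n → ℝ) (x : Fin m → ℝ) (y : Fin n → ℝ) : ℝ :=
  ∑ i, ∑ j, x i * A i j * y j

/-- Payoff of mixed strategy `x` against pure strategy `j` of player 2. -/
def P (A : Fin m → Fin n → ℝ) (x : Fin m → ℝ) (j : Fin n) : ℝ :=
  ∑ i, x i * A i j

/-- Worst-case value of mixed strategy `x`: the minimum over pure strategies of player 2. -/
def wc [NeZero n] (A : Fin m → Fin n → ℝ) (x : Fin m → ℝ) : ℝ :=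
  Finset.univ.inf' Finset.univ_nonempty (P A x)

/-- Lemma 1: nonnegativity of the gift counter in EEFEWP. -/
theorem eefewp_gift_counter_nonneg
    [NeZero m] [NeZero n] (A : Fin m → Fin n → ℝ)
    (σ0 : Fin m → ℝ) (hσ0 : σ0 ∈ stdSimplex ℝ (Fin m))
    (v' : ℝ) (hv' : v' = wc A σ0)
    (σ : ℕ → (Fin m → ℝ)) (hσ : ∀ t, σ t ∈ stdSimplex ℝ (Fin m))
    (c : ℕ → ℝ) (hc : ∀ t ≥ 1, c t ≥ wc A (σ t))
    (k : ℕ → ℝ) (hk1 : k 1 = 0)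
    (hkrec : ∀ t ≥ 1, k (t + 1) = k t + c t - v')
    (hsafe : ∀ t ≥ 1, σ t = σ0 ∨ wc A (σ t) ≥ v' - k t) :
    ∀ t ≥ 1, k t ≥ 0 := by
  intro t ht
  induction t with
  | zero => omega
  | succ s ih =>
    rcases Nat.eq_or_lt_of_le ht with h | h
    · simp [← h, hk1]
    · have hs1 : s ≥ 1 := by omega
      have ihs := ih hs1
      have hrec := hkrec s hs1
      have hcs := hc s hs1
      rcases hsafe s hs1 with h0 | hsafe'
      · have : wc A (σ s) = v' := by rw [h0, hv']
        linarith
      · linarith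
end
end

section
/- (Lemma 2: EEFEWP is prime-safe.) Let σ : ℕ → stdSimplex ℝ (Fin m) be the sequence of mixed strategies maintained by the algorithm, y : ℕ → stdSimplex ℝ (Fin n) the (arbitrary, possibly adaptive) sequence of mixed strategies actually played by the opponent, and c : ℕ → ℝ the sequence of credited round payoffs (the payoff of the constrained nemesis), satisfying wc (σ t) ≤ c t ≤ U (σ t) (y t) for every t ≥ 1. Define the gift counter by k 1 = 0 and k (t+1) = k t + c t − v'. If for every t ≥ 1 either σ t = σ⁰ or wc (σ t) ≥ v' − k t, then for every horizon T ≥ 1 the total expected payoff satisfies ∑_{t=1}^{T} U (σ t) (y t) ≥ T * v'. -/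
noncomputable section

variable {m n : ℕ}

/-- Lemma 2: EEFEWP is prime-safe — the total expected payoff over any horizon `T` is at
least `T * v'`, where `v' = wc σ⁰` is the prime value of the game. -/
theorem eefewp_prime_safe
    [NeZero m] [NeZero n] (A : Fin m → Fin n → ℝ)
    (σ0 : Fin m → ℝ) (hσ0 : σ0 ∈ stdSimplex ℝ (Fin m))
    (v' : ℝ) (hv' : v' = wc A σ0)
    (σ : ℕ → (Fin m → ℝ)) (hσ : ∀ t, σ t ∈ stdSimplex ℝ (Fin m))
    (y : ℕ → (Fin n → ℝ)) (hy : ∀ t, y t ∈ stdSimplex ℝ (Fin n))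
    (c : ℕ → ℝ)
    (hc : ∀ t ≥ 1, wc A (σ t) ≤ c t ∧ c t ≤ U A (σ t) (y t))
    (k : ℕ → ℝ) (hk1 : k 1 = 0)
    (hkrec : ∀ t ≥ 1, k (t + 1) = k t + c t - v')
    (hsafe : ∀ t ≥ 1, σ t = σ0 ∨ wc A (σ t) ≥ v' - k t) :
    ∀ T ≥ 1, ∑ t ∈ Finset.Icc 1 T, U A (σ t) (y t) ≥ T * v' := by
  have hknn : ∀ t, 1 ≤ t → 0 ≤ k t := by
    intro t ht
    induction t with
    | zero => omega
    | succ s ih =>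
      rcases Nat.lt_or_ge 1 (s + 1) with h | h
      · have hs : 1 ≤ s := by omega
        have hks := ih hs
        have hrec := hkrec s hs
        have hcs := (hc s hs).1
        rcases hsafe s hs with h0 | h0
        · have : wc A (σ s) = v' := by rw [h0, hv']
          linarith
        · linarith
      · have : s + 1 = 1 := by omega
        rw [this, hk1]
  have hsum : ∀ T, 1 ≤ T → ∑ t ∈ Finset.Icc 1 T, c t = T * v' + k (T + 1) := by
    intro T hT
    induction T with
    | zero => omega
    | succ s ih =>
      rcases Nat.lt_or_ge 1 (s + 1) with h | h
      · have hs : 1 ≤ s := by omega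
        rw [Finset.sum_Icc_succ_top (by omega : 1 ≤ s + 1), ih hs,
          hkrec (s + 1) (by omega)]
        push_cast
        ring
      · have hs0 : s = 0 := by omega
        subst hs0
        rw [hkrec 1 le_rfl, hk1]
        simp
  intro T hT
  have h1 : ∑ t ∈ Finset.Icc 1 T, c t ≤ ∑ t ∈ Finset.Icc 1 T, U A (σ t) (y t) := by
    refine Finset.sum_le_sum fun t ht => ?_
    exact (hc t (Finset.mem_Icc.mp ht).1).2
  have h2 := hsum T hT
  have h3 := hknn (T + 1) (by omega)
  linarith
end
end

section
/- (EEFEWP is β-safe with β the exploitability of the initial strategy.) Let v be the maximin value of the game, v = sSup { wc x | x ∈ stdSimplex ℝ (Fin m) }, and let β = v − wc σ⁰ be the exploitability of σ⁰. Let σ : ℕ → stdSimplex ℝ (Fin m), y : ℕ → stdSimplex ℝ (Fin n), and c : ℕ → ℝ satisfy wc (σ t) ≤ c t ≤ U (σ t) (y t) for every t ≥ 1, define k 1 = 0 and k (t+1) = k t + c t − v', and suppose for every t ≥ 1 either σ t = σ⁰ or wc (σ t) ≥ v' − k t. Then for every horizon T ≥ 1, ∑_{t=1}^{T} U (σ t)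 (y t) ≥ T * (v − β). -/
noncomputable section

variable {m n : ℕ}

/-- EEFEWP is β-safe, where `β = v − wc σ⁰` is the exploitability of the initial strategy
and `v` is the maximin value of the game. -/
theorem eefewp_beta_safe
    [NeZero m] [NeZero n] (A : Fin m → Fin n → ℝ)
    (σ0 : Fin m → ℝ) (hσ0 : σ0 ∈ stdSimplex ℝ (Fin m))
    (v' : ℝ) (hv' : v' = wc A σ0)
    (v : ℝ) (hv : v = sSup {z : ℝ | ∃ x ∈ stdSimplex ℝ (Fin m), wc A x = z})
    (β : ℝ) (hβ : β = v - wc A σ0)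
    (σ : ℕ → (Fin m → ℝ)) (hσ : ∀ t, σ t ∈ stdSimplex ℝ (Fin m))
    (y : ℕ → (Fin n → ℝ)) (hy : ∀ t, y t ∈ stdSimplex ℝ (Fin n))
    (c : ℕ → ℝ)
    (hc : ∀ t ≥ 1, wc A (σ t) ≤ c t ∧ c t ≤ U A (σ t) (y t))
    (k : ℕ → ℝ) (hk1 : k 1 = 0)
    (hkrec : ∀ t ≥ 1, k (t + 1) = k t + c t - v')
    (hsafe : ∀ t ≥ 1, σ t = σ0 ∨ wc A (σ t) ≥ v' - k t) :
    ∀ T ≥ 1, ∑ t ∈ Finset.Icc 1 T, U A (σ t) (y t) ≥ T * (v - β) := by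

  intro T hT
  have hvb : v - β = v' := by rw [hβ, hv']; ring
  rw [hvb]
  -- k is nonnegative
  have hknn : ∀ t, k (t + 1) ≥ 0 := by
    intro t
    induction t with
    | zero => simpa using hk1.ge
    | succ s ih =>
      have hs1 : s + 1 ≥ 1 := Nat.le_add_left 1 s
      rw [hkrec (s + 1) hs1]
      rcases hsafe (s + 1) hs1 with h | h
      · have : v' ≤ c (s + 1) := by
          rw [hv']
          calc wc A σ0 = wc A (σ (s+1)) := by rw [h]
            _ ≤ c (s+1) := (hc (s+1) hs1).1
        linarith
      · have := (hc (s + 1) hs1).1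
        linarith
  have key : ∀ T : ℕ, ∑ t ∈ Finset.Icc 1 T, U A (σ t) (y t) ≥ k (T + 1) + T * v' := by
    intro T
    induction T with
    | zero => simp [hk1]
    | succ s ih =>
      rw [Finset.sum_Icc_succ_top (Nat.le_add_left 1 s)]
      have hs1 : s + 1 ≥ 1 := Nat.le_add_left 1 s
      have h2 := (hc (s + 1) hs1).2
      have hr := hkrec (s + 1) hs1
      push_cast
      rw [hr]
      push_cast at ih
      linarith
  have := key T
  have := hknn T
  push_cast
  linarith
end
end

section
/- (Lemma 3: EEFFE is prime-safe.) Fix a horizon T ≥ 1, a switch time t₀ with 1 ≤ t₀ ≤ T + 1, and a real ε' ≥ 0. Let σ : ℕ → stdSimplex ℝ (Fin m) be the strategies played, y : ℕ → stdSimplex ℝ (Fin n) the opponent's actual mixed strategies, and c : ℕ → ℝ credited round payoffs with wc (σ t) ≤ c t ≤ U (σ t) (y t) for every t ≥ 1; define k 1 = 0 and k (t+1) = k t + c t − v'. Suppose: (i) σ t = σ⁰ for all t < t₀ (the algorithm plays the initial strategy before switching); (ii) if t₀ ≤ T then k t₀ ≥ (T − t₀ + 1) * ε' (the accumulated gifts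 cover the worst-case losses of full exploitation for the remaining rounds); (iii) wc (σ t) ≥ v' − ε' for all t with t₀ ≤ t ≤ T (the exploitative strategy has exploitability at most ε' relative to v'). Then ∑_{t=1}^{T} U (σ t) (y t) ≥ T * v'. -/
noncomputable section

variable {m n : ℕ}

/-- Lemma 3: EEFFE is prime-safe. The algorithm plays the initial strategy `σ⁰` until a
switch time `t₀`, switching only if the accumulated gifts `k t₀` cover the worst-case
losses `(T − t₀ + 1) * ε'` of full exploitation for the remaining rounds. -/
theorem eeffe_prime_safe
    [NeZero m] [NeZero n] (A : Fin m → Fin n → ℝ)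
    (σ0 : Fin m → ℝ) (hσ0 : σ0 ∈ stdSimplex ℝ (Fin m))
    (v' : ℝ) (hv' : v' = wc A σ0)
    (T : ℕ) (hT : 1 ≤ T)
    (t₀ : ℕ) (ht₀1 : 1 ≤ t₀) (ht₀T : t₀ ≤ T + 1)
    (ε' : ℝ) (hε' : 0 ≤ ε')
    (σ : ℕ → (Fin m → ℝ)) (hσ : ∀ t, σ t ∈ stdSimplex ℝ (Fin m))
    (y : ℕ → (Fin n → ℝ)) (hy : ∀ t, y t ∈ stdSimplex ℝ (Fin n))
    (c : ℕ → ℝ)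
    (hc : ∀ t ≥ 1, wc A (σ t) ≤ c t ∧ c t ≤ U A (σ t) (y t))
    (k : ℕ → ℝ) (hk1 : k 1 = 0)
    (hkrec : ∀ t ≥ 1, k (t + 1) = k t + c t - v')
    (hpre : ∀ t < t₀, σ t = σ0)
    (hswitch : t₀ ≤ T → k t₀ ≥ ((T : ℝ) - t₀ + 1) * ε')
    (hpost : ∀ t, t₀ ≤ t → t ≤ T → wc A (σ t) ≥ v' - ε') :
    ∑ t ∈ Finset.Icc 1 T, U A (σ t) (y t) ≥ T * v' := by
  -- Reduce to the sum of credited payoffs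
  have hUc : ∀ t ∈ Finset.Icc 1 T, c t ≤ U A (σ t) (y t) := by
    intro t ht
    exact (hc t (Finset.mem_Icc.mp ht).1).2
  have h1 : ∑ t ∈ Finset.Icc 1 T, c t ≤ ∑ t ∈ Finset.Icc 1 T, U A (σ t) (y t) :=
    Finset.sum_le_sum hUc
  suffices hsum : (T : ℝ) * v' ≤ ∑ t ∈ Finset.Icc 1 T, c t by linarith
  -- closed form for k
  have hkf : ∀ t, 1 ≤ t → k t = ∑ s ∈ Finset.Icc 1 (t - 1), (c s - v') := by
    intro t ht
    induction t with
    | zero => omega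
    | succ t ih =>
      rcases Nat.lt_or_ge 1 (t + 1) with h | h
      · have ht1 : 1 ≤ t := by omega
        have : t + 1 - 1 = (t - 1) + 1 := by omega
        rw [hkrec t ht1, ih ht1, this, Finset.sum_Icc_succ_top (by omega)]
        have : t - 1 + 1 = t := by omega
        rw [this]; ring
      · have : t = 0 := by omega
        subst this; simpa using hk1
  have hlow : ∀ t, 1 ≤ t → t < t₀ → v' ≤ c t := by
    intro t h1t h2t
    have := (hc t h1t).1
    rw [hpre t h2t, ← hv'] at this
    exact this
  rcases Nat.lt_or_ge T t₀ with hcase | hcase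
  · -- t₀ = T + 1 : never switch
    have : ∀ t ∈ Finset.Icc 1 T, v' ≤ c t := by
      intro t ht
      have := Finset.mem_Icc.mp ht
      exact hlow t this.1 (by omega)
    calc (T : ℝ) * v' = ∑ _t ∈ Finset.Icc 1 T, v' := by
          rw [Finset.sum_const, Nat.card_Icc]; push_cast [Nat.add_sub_cancel]; ring
      _ ≤ ∑ t ∈ Finset.Icc 1 T, c t := Finset.sum_le_sum this
  · -- t₀ ≤ T
    have hsplit : ∑ t ∈ Finset.Icc 1 T, c t
        = ∑ t ∈ Finset.Icc 1 (t₀ - 1), c t + ∑ t ∈ Finset.Icc t₀ T, c t := by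
      have h1 : Finset.Icc 1 T = Finset.Ico 1 (T + 1) := by
        rw [Finset.Ico_add_one_right_eq_Icc]
      have h2 : Finset.Icc 1 (t₀ - 1) = Finset.Ico 1 t₀ := by
        rw [← Finset.Ico_add_one_right_eq_Icc]
        congr 1; omega
      have h3 : Finset.Icc t₀ T = Finset.Ico t₀ (T + 1) := by
        rw [Finset.Ico_add_one_right_eq_Icc]
      rw [h1, h2, h3, Finset.sum_Ico_consecutive _ (by omega) (by omega)]
    have hk0 : k t₀ = ∑ s ∈ Finset.Icc 1 (t₀ - 1), (c s - v') := hkf t₀ ht₀1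
    have hkval : ((T : ℝ) - t₀ + 1) * ε' ≤ k t₀ := hswitch hcase
    have hA : ∑ s ∈ Finset.Icc 1 (t₀ - 1), c s
        = k t₀ + ((t₀ : ℝ) - 1) * v' := by
      rw [hk0, Finset.sum_sub_distrib, Finset.sum_const, Nat.card_Icc]
      have : t₀ - 1 + 1 - 1 = t₀ - 1 := by omega
      rw [this]
      rw [nsmul_eq_mul]
      have : ((t₀ - 1 : ℕ) : ℝ) = (t₀ : ℝ) - 1 := by
        push_cast [Nat.cast_sub ht₀1]; ring
      rw [this]; ring
    have hB : ((T : ℝ) - t₀ + 1) * (v' - ε') ≤ ∑ t ∈ Finset.Icc t₀ T, c t := by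
      have hb : ∀ t ∈ Finset.Icc t₀ T, v' - ε' ≤ c t := by
        intro t ht
        have := Finset.mem_Icc.mp ht
        have h2 := (hc t (by omega)).1
        have h3 := hpost t this.1 this.2
        linarith
      calc ((T : ℝ) - t₀ + 1) * (v' - ε')
          = ∑ _t ∈ Finset.Icc t₀ T, (v' - ε') := by
            rw [Finset.sum_const, Nat.card_Icc]
            rw [nsmul_eq_mul]
            have : ((T + 1 - t₀ : ℕ) : ℝ) = (T : ℝ) - t₀ + 1 := by
              push_cast [Nat.cast_sub (by omega : t₀ ≤ T + 1)]; ring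
            rw [this]
        _ ≤ ∑ t ∈ Finset.Icc t₀ T, c t := Finset.sum_le_sum hb
    rw [hsplit, hA]
    nlinarith [hε']
end
end

section
/- (Lemma 4: PRWYWE is prime-safe.) Let σ : ℕ → stdSimplex ℝ (Fin m) be the sequence of mixed strategies maintained by the algorithm, let j : ℕ → Fin n be the opponent's observed pure actions, and let c : ℕ → ℝ be credited round payoffs satisfying wc (σ t) ≤ c t ≤ P (σ t) (j t) for every t ≥ 1 (the payoff of the best response constrained to play the observed action lies between the worst case and the realized expected payoff). Define k 1 = 0 and k (t+1) = k t + c t − v'. If at every round t ≥ 1 the strategy played is k t-prime-safe, i.e. wc (σ t) ≥ v' − k t, then k t ≥ 0 for all t ≥ 1 and, for every horizon T ≥ 1, ∑_{t=1}^{T} P (σ t) (j t) ≥ T * v'. -/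
noncomputable section

variable {m n : ℕ}

/-- Lemma 4: PRWYWE is prime-safe. If at every round the strategy played is
`k t`-prime-safe, then the gift counter is nonnegative and the total expected payoff over
any horizon `T` is at least `T * v'`. -/
theorem prwywe_prime_safe
    [NeZero m] [NeZero n] (A : Fin m → Fin n → ℝ)
    (σ0 : Fin m → ℝ) (hσ0 : σ0 ∈ stdSimplex ℝ (Fin m))
    (v' : ℝ) (hv' : v' = wc A σ0)
    (σ : ℕ → (Fin m → ℝ)) (hσ : ∀ t, σ t ∈ stdSimplex ℝ (Fin m))
    (j : ℕ → Fin n)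
    (c : ℕ → ℝ)
    (hc : ∀ t ≥ 1, wc A (σ t) ≤ c t ∧ c t ≤ P A (σ t) (j t))
    (k : ℕ → ℝ) (hk1 : k 1 = 0)
    (hkrec : ∀ t ≥ 1, k (t + 1) = k t + c t - v')
    (hsafe : ∀ t ≥ 1, wc A (σ t) ≥ v' - k t) :
    (∀ t ≥ 1, k t ≥ 0) ∧
      ∀ T ≥ 1, ∑ t ∈ Finset.Icc 1 T, P A (σ t) (j t) ≥ T * v' := by
  have hknn : ∀ t ≥ 1, k t ≥ 0 := by
    intro t ht
    induction t with
    | zero => omega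
    | succ s ih =>
      rcases Nat.eq_or_lt_of_le ht with h | h
      · simp [← h, hk1]
      · have hs : s ≥ 1 := by omega
        have := (hc s hs).1
        have := hsafe s hs
        have := hkrec s hs
        linarith
  refine ⟨hknn, ?_⟩
  have key : ∀ T, ∑ t ∈ Finset.Icc 1 T, c t = k (T + 1) - k 1 + T * v' := by
    intro T
    induction T with
    | zero => simp
    | succ T ih =>
      rw [Finset.sum_Icc_succ_top (by omega), ih, hkrec (T + 1) (by omega)]
      push_cast
      ring
  intro T hT
  have h1 : ∑ t ∈ Finset.Icc 1 T, c t ≤ ∑ t ∈ Finset.Icc 1 T, P A (σ t) (j t) := by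
    apply Finset.sum_le_sum
    intro i hi
    exact (hc i (Finset.mem_Icc.mp hi).1).2
  have h2 := hknn (T + 1) (by omega)
  have := key T
  rw [hk1] at this
  linarith
end
end
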